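/- For every simple symmetric fractional hedonic game represented by a finite simple graph that is a forest (contains no cycles), the core is non-empty: there exists a partition of the vertex set that no coalition blocks. -/

import Mathlib

open Finset SimpleGraph
open scoped Classical

variable {V : Type*} [Fintype V] [DecidableEq V]

/-- The utility of player `i` in coalition `S` in the simple symmetric fractional
hedonic game given by the graph `G`: the number of neighbors of `i` in `S`
divided by the size of `S`. -/
noncomputable def util (G : SimpleGraph V) (i : V) (S : Finset V) : ℚ :=
  ((S.filter fun j => G.Adj i j).card : ℚ) / (S.card : ℚ)

/-- A partition of the player set `V`, given by the block `part i` of each player `i`. -/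
structure GamePartition (V : Type*) [Fintype V] [DecidableEq V] where
  part : V → Finset V
  mem_part : ∀ i, i ∈ part i
  part_eq : ∀ i j, j ∈ part i → part j = part i

/-- A nonempty coalition `S` blocks `π` if every member is strictly better off in `S`. -/
def Blocks (G : SimpleGraph V) (π : GamePartition V) (S : Finset V) : Prop :=
  S.Nonempty ∧ ∀ i ∈ S, util G i (π.part i) < util G i S

/-- A partition is in the core if no nonempty coalition blocks it. -/
def InCore (G : SimpleGraph V) (π : GamePartition V) : Prop :=
  ∀ S : Finset V, ¬ Blocks G π S

/-- A nonempty coalition `S` weakly blocks `π` if every member is weakly better off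
in `S` and some member is strictly better off. -/
def WeaklyBlocks (G : SimpleGraph V) (π : GamePartition V) (S : Finset V) : Prop :=
  S.Nonempty ∧ (∀ i ∈ S, util G i (π.part i) ≤ util G i S) ∧
    ∃ j ∈ S, util G j (π.part j) < util G j S

/-- A partition is in the strict core if no nonempty coalition weakly blocks it. -/
def InStrictCore (G : SimpleGraph V) (π : GamePartition V) : Prop :=
  ∀ S : Finset V, ¬ WeaklyBlocks G π S


lemma exists_star (G : SimpleGraph V) (hforest : G.IsAcyclic) (A : Finset V)
    (hedge : ∃ a ∈ A, ∃ b ∈ A, G.Adj a b) :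
    ∃ v ∈ A, ∃ L : Finset V, L.Nonempty ∧ L ⊆ A ∧ v ∉ L ∧
      (∀ w ∈ L, G.Adj v w) ∧ (∀ w ∈ L, ∀ x ∈ A, G.Adj w x → x = v) ∧
      ((A.filter fun x => G.Adj v x) \ L).card ≤ 1 := by
  classical
  obtain ⟨a, ha, b, hb, hab⟩ := hedge
  set Q : ℕ → Prop := fun n => ∃ (x y : V) (p : G.Walk x y), p.IsPath ∧
      (∀ z ∈ p.support, z ∈ A) ∧ p.length = n with hQ
  have hQ1 : Q 1 := by
    refine ⟨a, b, (SimpleGraph.Path.singleton hab).1, (SimpleGraph.Path.singleton hab).2, ?_, ?_⟩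
    · intro z hz
      simp [SimpleGraph.Path.singleton] at hz
      rcases hz with rfl | rfl <;> assumption
    · simp [SimpleGraph.Path.singleton]
  have hcard1 : 1 ≤ Fintype.card V := Fintype.card_pos_iff.mpr ⟨a⟩
  set N := Nat.findGreatest Q (Fintype.card V) with hNdef
  have hN1 : 1 ≤ N := Nat.le_findGreatest hcard1 hQ1
  have hQN : Q N := Nat.findGreatest_spec hcard1 hQ1
  have hmax : ∀ (x y : V) (p : G.Walk x y), p.IsPath → (∀ z ∈ p.support, z ∈ A) →
      p.length ≤ N := by
    intro x y p hp hpA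
    by_contra hlt
    push_neg at hlt
    exact Nat.findGreatest_is_greatest hlt hp.length_lt.le ⟨x, y, p, hp, hpA, rfl⟩
  obtain ⟨x0, b', p, hp, hpA, hplen⟩ := hQN
  cases p with
  | nil => simp at hplen; omega
  | @cons _ v _ h q =>
    rw [Walk.cons_isPath_iff] at hp
    obtain ⟨hq, hx0q⟩ := hp
    have hqlen : q.length + 1 = N := by simpa using hplen
    have hqA : ∀ z ∈ q.support, z ∈ A := fun z hz => hpA z (by simp [hz])
    have hvA : v ∈ A := hqA v q.start_mem_support
    have hx0A : x0 ∈ A := hpA x0 (by simp)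
    -- Sub-lemma A : a neighbor of v (in A) not on q is a leaf.
    have leafA : ∀ y ∈ A, G.Adj v y → y ∉ q.support → ∀ x ∈ A, G.Adj y x → x = v := by
      intro y hyA hvy hynq x hxA hyx
      by_contra hxv
      have hyv : y ≠ v := hvy.ne'
      by_cases hxq : x ∈ q.support
      · -- two paths from y to x
        have hp2 : (Walk.cons hvy.symm (q.takeUntil x hxq)).IsPath := by
          rw [Walk.cons_isPath_iff]
          exact ⟨hq.takeUntil hxq, fun hc => hynq (q.support_takeUntil_subset hxq hc)⟩
        have := isAcyclic_iff_path_unique.mp hforest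
          (SimpleGraph.Path.singleton hyx) ⟨_, hp2⟩
        have hlen := congrArg (fun (r : G.Path y x) => r.1.length) this
        simp [SimpleGraph.Path.singleton] at hlen
        exact hxv hlen.symm
      · -- extend the path by two
        have hxy : x ≠ y := hyx.ne'
        have hr2 : (Walk.cons hyx.symm (Walk.cons hvy.symm q)).IsPath := by
          rw [Walk.cons_isPath_iff, Walk.cons_isPath_iff]
          refine ⟨⟨hq, hynq⟩, ?_⟩
          simp only [Walk.support_cons, List.mem_cons]
          rintro (rfl | hc)
          · exact hxy rfl
          · exact hxq hc
        have hle := hmax _ _ _ hr2 ?_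
        · simp at hle; omega
        · intro z hz
          simp only [Walk.support_cons, List.mem_cons] at hz
          rcases hz with rfl | rfl | hz
          · exact hxA
          · exact hyA
          · exact hqA z hz
    -- Sub-lemma B : neighbors of v on q are all a single vertex c.
    have subB : ∃ c : V, ∀ y ∈ q.support, G.Adj v y → y = c := by
      cases q with
      | nil =>
        refine ⟨x0, fun y hy hvy => absurd hvy ?_⟩
        simp only [Walk.support_nil, List.mem_singleton] at hy
        subst hy
        exact G.irrefl
      | @cons _ c _ h' q2 =>
        refine ⟨c, fun y hy hvy => ?_⟩
        have hpath := isAcyclic_iff_path_unique.mp hforest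
          (SimpleGraph.Path.singleton hvy) ⟨_, hq.takeUntil hy⟩
        have hval : (SimpleGraph.Path.singleton hvy).1 =
            ((Walk.cons h' q2).takeUntil y hy) := congrArg Subtype.val hpath
        have hspec := Walk.take_spec (Walk.cons h' q2) hy
        rw [← hval] at hspec
        simp [SimpleGraph.Path.singleton] at hspec
        exact hspec.1
    obtain ⟨c, hc⟩ := subB
    set L := A.filter (fun y => G.Adj v y ∧ ∀ x ∈ A, G.Adj y x → x = v) with hL
    have hx0L : x0 ∈ L := by
      rw [hL, mem_filter]
      exact ⟨hx0A, h.symm, leafA x0 hx0A h.symm hx0q⟩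
    refine ⟨v, hvA, L, ⟨x0, hx0L⟩, filter_subset _ _, ?_, ?_, ?_, ?_⟩
    · intro hvL
      rw [hL, mem_filter] at hvL
      exact G.irrefl hvL.2.1
    · intro w hw; rw [hL, mem_filter] at hw; exact hw.2.1
    · intro w hw; rw [hL, mem_filter] at hw; exact hw.2.2
    · refine le_trans (card_le_card (fun x hx => ?_)) (card_singleton c).le
      rw [mem_sdiff, mem_filter] at hx
      obtain ⟨⟨hxA, hvx⟩, hxL⟩ := hx
      rw [mem_singleton]
      by_cases hxq : x ∈ q.support
      · exact hc x hxq hvx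
      · exact absurd (mem_filter.mpr ⟨hxA, hvx, leafA x hxA hvx hxq⟩) hxL

lemma util_nonneg (G : SimpleGraph V) (i : V) (S : Finset V) : 0 ≤ util G i S := by
  unfold util; positivity

lemma harith1 (c s k : ℕ) (h1 : c + 1 ≤ s) (h2 : s ≤ k) : (c : ℚ) / s ≤ k / (k + 1) := by
  have hs0 : (0 : ℚ) < s := by exact_mod_cast Nat.lt_of_lt_of_le (Nat.succ_pos c) h1
  have hk0 : (0 : ℚ) < (k : ℚ) + 1 := by positivity
  rw [div_le_div_iff₀ hs0 hk0]
  have hc : (c : ℚ) + 1 ≤ s := by exact_mod_cast h1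
  have hsk : (s : ℚ) ≤ k := by exact_mod_cast h2
  nlinarith [mul_nonneg (by positivity : (0:ℚ) ≤ (k:ℚ)) (by linarith : (0:ℚ) ≤ (s:ℚ) - c - 1)]

lemma core_aux (G : SimpleGraph V) (hforest : G.IsAcyclic)
    (hstar : ∀ A : Finset V, (∃ a ∈ A, ∃ b ∈ A, G.Adj a b) →
      ∃ v ∈ A, ∃ L : Finset V, L.Nonempty ∧ L ⊆ A ∧ v ∉ L ∧
        (∀ w ∈ L, G.Adj v w) ∧ (∀ w ∈ L, ∀ x ∈ A, G.Adj w x → x = v) ∧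
        ((A.filter fun x => G.Adj v x) \ L).card ≤ 1) :
    ∀ n (A : Finset V), A.card ≤ n → ∃ f : V → Finset V,
      (∀ i ∈ A, i ∈ f i) ∧ (∀ i ∈ A, f i ⊆ A) ∧ (∀ i ∈ A, ∀ j ∈ f i, f j = f i) ∧
      (∀ S : Finset V, S ⊆ A → S.Nonempty → ∃ i ∈ S, util G i S ≤ util G i (f i)) := by
  intro n
  induction n with
  | zero =>
    intro A hA
    have hAe : A = ∅ := card_eq_zero.mp (Nat.le_zero.mp hA)
    subst hAe
    refine ⟨fun i => {i}, by simp, by simp, by simp, ?_⟩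
    intro S hS hSne
    exact absurd (subset_empty.mp hS) (nonempty_iff_ne_empty.mp hSne)
  | succ n ih =>
    intro A hA
    by_cases hedge : ∃ a ∈ A, ∃ b ∈ A, G.Adj a b
    · obtain ⟨v, hvA, L, hLne, hLA, hvL, hadj, hleaf, hpar⟩ := hstar A hedge
      set C := insert v L with hCdef
      have hvC : v ∈ C := mem_insert_self v L
      have hCA : C ⊆ A := insert_subset hvA hLA
      set k := L.card with hkdef
      have hk1 : 1 ≤ k := card_pos.mpr hLne
      have hCcard : C.card = k + 1 := by
        rw [hCdef, card_insert_of_notMem hvL]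
      set A' := A \ C with hA'def
      have hA'n : A'.card ≤ n := by
        have hlt : A'.card < A.card :=
          card_lt_card ⟨sdiff_subset, fun hsub => (mem_sdiff.mp (hsub hvA)).2 hvC⟩
        omega
      obtain ⟨f', h1, h2, h3, h4⟩ := ih A' hA'n
      have hA'C : ∀ i ∈ A', i ∉ C := fun i hi => (mem_sdiff.mp hi).2
      refine ⟨fun i => if i ∈ C then C else f' i, ?_, ?_, ?_, ?_⟩
      · intro i hiA
        by_cases hiC : i ∈ C
        · simp [hiC]
        · simp only [hiC, if_false]
          exact h1 i (mem_sdiff.mpr ⟨hiA, hiC⟩)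
      · intro i hiA
        by_cases hiC : i ∈ C
        · simpa [hiC] using hCA
        · simp only [hiC, if_false]
          exact (h2 i (mem_sdiff.mpr ⟨hiA, hiC⟩)).trans sdiff_subset
      · intro i hiA j hj
        by_cases hiC : i ∈ C
        · simp only [hiC, if_true] at hj ⊢
          simp [hj]
        · simp only [hiC, if_false] at hj ⊢
          have hiA' : i ∈ A' := mem_sdiff.mpr ⟨hiA, hiC⟩
          have hjA' : j ∈ A' := h2 i hiA' hj
          simp only [hA'C j hjA', if_false]
          exact h3 i hiA' j hj
      · intro S hSA hSne
        -- utility computations in C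
        have hfilv : C.filter (fun j => G.Adj v j) = L := by
          ext j
          simp only [mem_filter, hCdef, mem_insert]
          constructor
          · rintro ⟨rfl | hjL, hadjj⟩
            · exact absurd hadjj G.irrefl
            · exact hjL
          · intro hjL
            exact ⟨Or.inr hjL, hadj j hjL⟩
        have hutilvC : util G v C = (k : ℚ) / (k + 1) := by
          rw [util, hfilv, hCcard]; push_cast; ring
        have hutilwC : ∀ w ∈ L, util G w C = 1 / (k + 1) := by
          intro w hwL
          have hfilw : C.filter (fun j => G.Adj w j) = {v} := by
            ext j
            simp only [mem_filter, hCdef, mem_insert, mem_singleton]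
            constructor
            · rintro ⟨rfl | hjL, hadjj⟩
              · rfl
              · exact hleaf w hwL j (hLA hjL) hadjj
            · rintro rfl
              exact ⟨Or.inl rfl, (hadj w hwL).symm⟩
          rw [util, hfilw, hCcard, card_singleton]; push_cast; ring
        by_cases hv : v ∈ S
        · have hs1 : 1 ≤ S.card := card_pos.mpr ⟨v, hv⟩
          by_cases hL : ∃ w ∈ S, w ∈ L
          · obtain ⟨w, hwS, hwL⟩ := hL
            by_cases hs : S.card ≤ k
            · refine ⟨v, hv, ?_⟩
              simp only [hvC, if_true]
              rw [hutilvC, util]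
              have hsub : S.filter (fun j => G.Adj v j) ⊆ S.erase v := by
                intro j hj
                rw [mem_filter] at hj
                exact mem_erase.mpr ⟨fun hjv => G.irrefl (hjv ▸ hj.2), hj.1⟩
              have hc : (S.filter (fun j => G.Adj v j)).card + 1 ≤ S.card := by
                have := card_le_card hsub
                rw [card_erase_of_mem hv] at this
                omega
              exact harith1 _ _ _ hc hs
            · push_neg at hs
              refine ⟨w, hwS, ?_⟩
              have hwC : w ∈ C := mem_insert_of_mem hwL
              simp only [hwC, if_true]
              rw [hutilwC w hwL, util]
              have hsub : S.filter (fun j => G.Adj w j) ⊆ {v} := by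
                intro j hj
                rw [mem_filter] at hj
                exact mem_singleton.mpr (hleaf w hwL j (hSA hj.1) hj.2)
              have hc : (S.filter (fun j => G.Adj w j)).card ≤ 1 := by
                simpa using card_le_card hsub
              have hs0 : (0 : ℚ) < S.card := by positivity
              have hk0 : (0 : ℚ) < (k : ℚ) + 1 := by positivity
              rw [div_le_div_iff₀ hs0 hk0]
              have : ((S.filter (fun j => G.Adj w j)).card : ℚ) ≤ 1 := by exact_mod_cast hc
              have hsk : ((k : ℚ) + 1) ≤ (S.card : ℚ) := by exact_mod_cast hs
              nlinarith
          · push_neg at hL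
            refine ⟨v, hv, ?_⟩
            simp only [hvC, if_true]
            rw [hutilvC, util]
            have hsub : S.filter (fun j => G.Adj v j) ⊆ (A.filter fun x => G.Adj v x) \ L := by
              intro j hj
              rw [mem_filter] at hj
              exact mem_sdiff.mpr ⟨mem_filter.mpr ⟨hSA hj.1, hj.2⟩, fun hjL => hL j hj.1 hjL⟩
            have hc1 : (S.filter (fun j => G.Adj v j)).card ≤ 1 :=
              le_trans (card_le_card hsub) hpar
            have hsub2 : S.filter (fun j => G.Adj v j) ⊆ S.erase v := by
              intro j hj
              rw [mem_filter] at hj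
              exact mem_erase.mpr ⟨fun hjv => G.irrefl (hjv ▸ hj.2), hj.1⟩
            have hc2 : (S.filter (fun j => G.Adj v j)).card + 1 ≤ S.card := by
              have := card_le_card hsub2
              rw [card_erase_of_mem hv] at this
              omega
            have hs0 : (0 : ℚ) < S.card := by positivity
            have hk0 : (0 : ℚ) < (k : ℚ) + 1 := by positivity
            rw [div_le_div_iff₀ hs0 hk0]
            set c := (S.filter (fun j => G.Adj v j)).card
            rcases Nat.eq_zero_or_pos c with hc0 | hc0
            · rw [hc0]
              push_cast
              have hkk : (0:ℚ) ≤ (k:ℚ) * (S.card:ℚ) := by positivity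
              linarith
            · have hcc : c = 1 := le_antisymm hc1 hc0
              rw [hcc] at hc2 ⊢
              have hs2 : (2 : ℚ) ≤ (S.card : ℚ) := by exact_mod_cast hc2
              have hk1' : (1 : ℚ) ≤ (k : ℚ) := by exact_mod_cast hk1
              push_cast
              nlinarith
        · by_cases hL : ∃ w ∈ S, w ∈ L
          · obtain ⟨w, hwS, hwL⟩ := hL
            refine ⟨w, hwS, ?_⟩
            have hwC : w ∈ C := mem_insert_of_mem hwL
            simp only [hwC, if_true]
            have hfile : S.filter (fun j => G.Adj w j) = ∅ := by
              rw [filter_eq_empty_iff]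
              intro j hj hadjj
              exact hv ((hleaf w hwL j (hSA hj) hadjj) ▸ hj)
            rw [util, hfile]
            simp only [card_empty, Nat.cast_zero, zero_div]
            exact util_nonneg G w C
          · push_neg at hL
            have hSA' : S ⊆ A' := by
              intro j hj
              refine mem_sdiff.mpr ⟨hSA hj, ?_⟩
              rw [hCdef, mem_insert]
              rintro (rfl | hjL)
              · exact hv hj
              · exact hL j hj hjL
            obtain ⟨i, hiS, hle⟩ := h4 S hSA' hSne
            refine ⟨i, hiS, ?_⟩
            simp only [hA'C i (hSA' hiS), if_false]
            exact hle
    · push_neg at hedge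
      refine ⟨fun i => {i}, fun i _ => mem_singleton_self i,
        fun i hi => singleton_subset_iff.mpr hi, ?_, ?_⟩
      · intro i _ j hj
        rw [mem_singleton] at hj
        rw [hj]
      · intro S hSA hSne
        obtain ⟨i, hi⟩ := hSne
        refine ⟨i, hi, ?_⟩
        have hfe : S.filter (fun j => G.Adj i j) = ∅ := by
          rw [filter_eq_empty_iff]
          intro j hj hadjj
          exact hedge i (hSA hi) j (hSA hj) hadjj
        rw [util, hfe]
        simp only [card_empty, Nat.cast_zero, zero_div]
        exact util_nonneg G i {i}

/-- For every simple symmetric fractional hedonic game represented by a finite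
simple graph that is a forest (contains no cycles), the core is non-empty. -/
theorem stmt_5 (G : SimpleGraph V) (hforest : G.IsAcyclic) :
    ∃ π : GamePartition V, InCore G π := by
  obtain ⟨f, h1, h2, h3, h4⟩ := core_aux G hforest (exists_star G hforest)
    (Fintype.card V) univ (le_of_eq card_univ)
  refine ⟨⟨f, fun i => h1 i (mem_univ i), fun i j hj => h3 i (mem_univ i) j hj⟩, ?_⟩
  rintro S ⟨hSne, hlt⟩
  obtain ⟨i, hiS, hle⟩ := h4 S (subset_univ S) hSne
  exact absurd (hlt i hiS) (not_lt.mpr hle)
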